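/- The set Λ = {k^3 : k ∈ ℤ} ⊂ ℝ is sparse: for every ε > 0 there exists a finite cover Λ = Λ₁ ∪ … ∪ Λ_m such that ∑_{j=1}^m 1/γ(Λ_j) < ε, where γ(S) := inf{|a - b| : a, b ∈ S, a ≠ b} (with γ(S) = +∞ if S has at most one element). -/

import Mathlib

open scoped ENNReal

variable {E : Type*} [NormedAddCommGroup E]

/-- The separation constant of a set: infimum of distances between distinct points
(`∞` if the set has at most one element). -/
noncomputable def gap (S : Set E) : ℝ≥0∞ :=
  ⨅ (a : E) (_ : a ∈ S) (b : E) (_ : b ∈ S) (_ : a ≠ b), (‖a - b‖₊ : ℝ≥0∞)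

/-- A set is sparse if for every `ε > 0` it admits a finite cover whose
reciprocal separation constants sum to less than `ε` (with `1/∞ = 0`). -/
def Sparse (S : Set E) : Prop :=
  ∀ ε : ℝ, 0 < ε → ∃ (m : ℕ) (Λ : Fin m → Set E),
    S = (⋃ j, Λ j) ∧ ∑ j, (gap (Λ j))⁻¹ < ENNReal.ofReal ε

lemma cube_gap (M : ℕ) (k l : ℤ) (hne : k ≠ l) (hdvd : (M:ℤ) ∣ (k - l)) :
    ((M:ℝ)^3 / 4) ≤ |(k:ℝ)^3 - (l:ℝ)^3| := by
  have hd : (M:ℤ) ≤ |k - l| := Int.le_of_dvd (abs_pos.mpr (sub_ne_zero.mpr hne)) ((dvd_abs _ _).mpr hdvd)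
  -- work over ℤ: 4 * |k^3 - l^3| ≥ M^3
  have key : (M:ℤ)^3 ≤ 4 * |k^3 - l^3| := by
    have h1 : (M:ℤ)^3 ≤ |k - l|^3 := by
      have h0 : (0:ℤ) ≤ (M:ℤ) := Int.natCast_nonneg M
      exact pow_le_pow_left₀ h0 hd 3
    have h2 : |k - l|^3 ≤ 4 * |k^3 - l^3| := by
      have habs : |k^3 - l^3| = |k - l| * |k^2 + k*l + l^2| := by
        rw [← abs_mul]; ring_nf
      rw [habs]
      have h3 : |k-l|^2 ≤ 4 * |k^2 + k*l + l^2| := by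
        have h4 : (0:ℤ) ≤ k^2 + k*l + l^2 := by nlinarith [sq_nonneg (k+l), sq_nonneg (k-l)]
        rw [abs_of_nonneg h4, sq_abs]
        nlinarith [sq_nonneg (k+l)]
      have h5 : (0:ℤ) ≤ |k - l| := abs_nonneg _
      nlinarith [abs_nonneg (k^2 + k*l + l^2)]
    linarith
  have key' : ((M:ℝ))^3 ≤ 4 * |(k:ℝ)^3 - (l:ℝ)^3| := by exact_mod_cast key
  linarith

theorem cubes_sparse : Sparse {x : ℝ | ∃ k : ℤ, x = (k : ℝ)^3} := by
  intro ε hε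
  obtain ⟨N, hN⟩ := exists_nat_gt (4 / ε)
  set M := N + 1 with hMdef
  have hMpos : 0 < M := Nat.succ_pos N
  have hMR : (4:ℝ)/ε < M := hN.trans_le (by exact_mod_cast Nat.le_succ N)
  have hMRpos : (0:ℝ) < M := by positivity
  refine ⟨M, fun r => {x | ∃ k : ℤ, k % (M:ℤ) = (r:ℤ) ∧ x = (k:ℝ)^3}, ?_, ?_⟩
  · ext x
    simp only [Set.mem_setOf_eq, Set.mem_iUnion]
    constructor
    · rintro ⟨k, rfl⟩
      have hMZ : (0:ℤ) < (M:ℤ) := by exact_mod_cast hMpos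
      have h1 : 0 ≤ k % (M:ℤ) := Int.emod_nonneg k (by omega)
      have h2 : k % (M:ℤ) < (M:ℤ) := Int.emod_lt_of_pos k hMZ
      refine ⟨⟨(k % (M:ℤ)).toNat, ?_⟩, k, ?_, rfl⟩
      · omega
      · simp [Int.toNat_of_nonneg h1]
    · rintro ⟨r, k, _, rfl⟩
      exact ⟨k, rfl⟩
  · have hgap : ∀ r : Fin M, ENNReal.ofReal ((M:ℝ)^3/4) ≤
        gap {x : ℝ | ∃ k : ℤ, k % (M:ℤ) = (r:ℤ) ∧ x = (k:ℝ)^3} := by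
      intro r
      refine le_iInf fun a => le_iInf fun ha => le_iInf fun b => le_iInf fun hb => le_iInf fun hab => ?_
      obtain ⟨k, hk, rfl⟩ := ha
      obtain ⟨l, hl, rfl⟩ := hb
      have hne : k ≠ l := by rintro rfl; exact hab rfl
      have hdvd : (M:ℤ) ∣ (k - l) := (Int.ModEq.symm (hk.trans hl.symm)).dvd
      have hle := cube_gap M k l hne hdvd
      rw [← ENNReal.ofReal_coe_nnreal, coe_nnnorm]
      exact ENNReal.ofReal_le_ofReal (by rwa [Real.norm_eq_abs])
    calc ∑ r : Fin M, (gap {x : ℝ | ∃ k : ℤ, k % (M:ℤ) = (r:ℤ) ∧ x = (k:ℝ)^3})⁻¹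
        ≤ ∑ _r : Fin M, ENNReal.ofReal (4/(M:ℝ)^3) := by
          refine Finset.sum_le_sum fun r _ => ?_
          have := ENNReal.inv_le_inv.mpr (hgap r)
          rwa [← ENNReal.ofReal_inv_of_pos (by positivity), inv_div] at this
      _ = M * ENNReal.ofReal (4/(M:ℝ)^3) := by
          rw [Finset.sum_const, Finset.card_univ, Fintype.card_fin, nsmul_eq_mul]
      _ = ENNReal.ofReal ((M:ℝ) * (4/(M:ℝ)^3)) := by
          rw [ENNReal.ofReal_mul (by positivity), ENNReal.ofReal_natCast]
      _ < ENNReal.ofReal ε := by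
          apply ENNReal.ofReal_lt_ofReal_iff hε |>.mpr
          have hM1 : (1:ℝ) ≤ M := by exact_mod_cast hMpos
          have h4 : (4:ℝ) < M * ε := by
            rw [div_lt_iff₀ hε] at hMR; linarith
          have : (M:ℝ) * (4/(M:ℝ)^3) = 4/(M:ℝ)^2 := by field_simp
          rw [this]
          rw [div_lt_iff₀ (by positivity)]
          nlinarith
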